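/- Let H be Higman's group: the presented group on four generators a, b, c, d subject to the four relations b a b⁻¹ = a², c b c⁻¹ = b², d c d⁻¹ = c², a d a⁻¹ = d². Then every homomorphism from H to a finite group is trivial; equivalently, every finite quotient of H is the trivial group. -/

import Mathlib

private lemma conj_pow_two {G : Type*} [Group G] {x y : G} (h : y * x * y⁻¹ = x ^ 2) :
    ∀ n : ℕ, y ^ n * x * (y ^ n)⁻¹ = x ^ (2 ^ n) := by
  intro n
  induction n with
  | zero => simp
  | succ n ih =>
    have : y ^ (n + 1) * x * (y ^ (n + 1))⁻¹ = y * (y ^ n * x * (y ^ n)⁻¹) * y⁻¹ := by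
      rw [pow_succ']
      group
    rw [this, ih, ← conj_pow, h, ← pow_mul, ← pow_succ']

private lemma order_dvd_aux {G : Type*} [Group G] {x y : G} (h : y * x * y⁻¹ = x ^ 2) :
    orderOf x ∣ 2 ^ orderOf y - 1 := by
  have h1 := conj_pow_two h (orderOf y)
  rw [pow_orderOf_eq_one] at h1
  simp only [one_mul, inv_one, mul_one] at h1
  apply orderOf_dvd_of_pow_eq_one
  have hpos : 0 < 2 ^ orderOf y := by positivity
  have : x ^ (2 ^ orderOf y - 1) * x = x := by
    rw [← pow_succ, Nat.sub_add_cancel hpos, ← h1]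
  calc x ^ (2 ^ orderOf y - 1) = x ^ (2 ^ orderOf y - 1) * x * x⁻¹ := by group
    _ = x * x⁻¹ := by rw [this]
    _ = 1 := mul_inv_cancel x

private lemma key_lemma {G : Type*} [Group G] [Finite G] {x y : G} (h : y * x * y⁻¹ = x ^ 2)
    {p : ℕ} (hp : p.Prime) (hdvd : p ∣ orderOf x) :
    ∃ q, q.Prime ∧ q < p ∧ q ∣ orderOf y := by
  have hm : 0 < orderOf y := orderOf_pos y
  have hpd : p ∣ 2 ^ orderOf y - 1 := dvd_trans hdvd (order_dvd_aux h)
  have h2m : 1 ≤ 2 ^ orderOf y := Nat.one_le_two_pow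
  have hp2 : p ≠ 2 := by
    intro hp2
    subst hp2
    have : 2 ∣ 2 ^ orderOf y := dvd_pow_self 2 hm.ne'
    omega
  haveI : Fact p.Prime := ⟨hp⟩
  have hmod : ((2 : ZMod p)) ^ orderOf y = 1 := by
    have : (2 : ℕ) ^ orderOf y ≡ 1 [MOD p] := (Nat.modEq_iff_dvd' h2m).mpr hpd |>.symm
    have := (ZMod.natCast_eq_natCast_iff _ _ _).mpr this
    push_cast at this
    exact this
  set e := orderOf (2 : ZMod p) with he
  have hedvd : e ∣ orderOf y := orderOf_dvd_of_pow_eq_one hmod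
  have h2ne : (2 : ZMod p) ≠ 0 := by
    intro h0
    have : ((2 : ℕ) : ZMod p) = 0 := by push_cast; exact h0
    have := (ZMod.natCast_eq_zero_iff 2 p).mp this
    exact hp2 ((Nat.prime_dvd_prime_iff_eq hp Nat.prime_two).mp this)
  have hep : e ∣ p - 1 := orderOf_dvd_of_pow_eq_one (ZMod.pow_card_sub_one_eq_one h2ne)
  have he1 : e ≠ 1 := by
    intro he1
    have : (2 : ZMod p) = 1 := orderOf_eq_one_iff.mp he1
    have h10 : (1 : ZMod p) = 0 := by linear_combination this
    exact one_ne_zero h10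
  have hppos : 1 < p := hp.one_lt
  have he0 : e ≠ 0 := by
    intro he0
    rw [he0] at hep
    have : p - 1 = 0 := Nat.eq_zero_of_zero_dvd hep
    omega
  refine ⟨e.minFac, Nat.minFac_prime he1, ?_, dvd_trans (Nat.minFac_dvd e) hedvd⟩
  have h1 : e.minFac ≤ e := Nat.minFac_le (Nat.pos_of_ne_zero he0)
  have h2 : e ≤ p - 1 := Nat.le_of_dvd (by omega) hep
  omega

/-- Generators of Higman's group: `a = 0`, `b = 1`, `c = 2`, `d = 3`. -/
private abbrev a : FreeGroup (Fin 4) := FreeGroup.of 0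
private abbrev b : FreeGroup (Fin 4) := FreeGroup.of 1
private abbrev c : FreeGroup (Fin 4) := FreeGroup.of 2
private abbrev d : FreeGroup (Fin 4) := FreeGroup.of 3

/-- The four Higman relators `(bab⁻¹)a⁻²`, `(cbc⁻¹)b⁻²`, `(dcd⁻¹)c⁻²`, `(ada⁻¹)d⁻²`. -/
def higmanRels : Set (FreeGroup (Fin 4)) :=
  { b * a * b⁻¹ * (a ^ 2)⁻¹,
    c * b * c⁻¹ * (b ^ 2)⁻¹,
    d * c * d⁻¹ * (c ^ 2)⁻¹,
    a * d * a⁻¹ * (d ^ 2)⁻¹ }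

/-- Higman's group `H = ⟨a, b, c, d ∣ bab⁻¹ = a², cbc⁻¹ = b², dcd⁻¹ = c², ada⁻¹ = d²⟩`. -/
abbrev HigmanGroup : Type := PresentedGroup higmanRels

private lemma rel_image {F : Type} [Group F] (f : HigmanGroup →* F)
    {r : FreeGroup (Fin 4)} (hr : r ∈ higmanRels) :
    f (PresentedGroup.mk higmanRels r) = 1 := by
  have h1 : PresentedGroup.mk higmanRels r = 1 :=
    (QuotientGroup.eq_one_iff _).mpr (Subgroup.subset_normalClosure hr)
  rw [h1, map_one]

/-- Every homomorphism from Higman's group to a finite group is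
trivial; equivalently every finite quotient of Higman's group is trivial. -/
theorem higman_no_finite_quotients :
    ∀ (F : Type) [Group F] [Finite F] (f : HigmanGroup →* F), f = 1 := by
  intro F _ _ f
  set A := f (PresentedGroup.mk higmanRels a) with hAdef
  set B := f (PresentedGroup.mk higmanRels b) with hBdef
  set C := f (PresentedGroup.mk higmanRels c) with hCdef
  set D := f (PresentedGroup.mk higmanRels d) with hDdef
  have expand : ∀ x y : FreeGroup (Fin 4),
      f (PresentedGroup.mk higmanRels (y * x * y⁻¹ * (x ^ 2)⁻¹)) =
        f (PresentedGroup.mk higmanRels y) * f (PresentedGroup.mk higmanRels x) *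
          (f (PresentedGroup.mk higmanRels y))⁻¹ *
          ((f (PresentedGroup.mk higmanRels x)) ^ 2)⁻¹ := by
    intro x y
    simp [map_mul, map_inv, map_pow]
  have hA : B * A * B⁻¹ = A ^ 2 := by
    have := rel_image f (show b * a * b⁻¹ * (a ^ 2)⁻¹ ∈ higmanRels by
      simp [higmanRels])
    rw [expand] at this
    exact mul_inv_eq_one.mp this
  have hB : C * B * C⁻¹ = B ^ 2 := by
    have := rel_image f (show c * b * c⁻¹ * (b ^ 2)⁻¹ ∈ higmanRels by
      simp [higmanRels])
    rw [expand] at this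
    exact mul_inv_eq_one.mp this
  have hC : D * C * D⁻¹ = C ^ 2 := by
    have := rel_image f (show d * c * d⁻¹ * (c ^ 2)⁻¹ ∈ higmanRels by
      simp [higmanRels])
    rw [expand] at this
    exact mul_inv_eq_one.mp this
  have hD : A * D * A⁻¹ = D ^ 2 := by
    have := rel_image f (show a * d * a⁻¹ * (d ^ 2)⁻¹ ∈ higmanRels by
      simp [higmanRels])
    rw [expand] at this
    exact mul_inv_eq_one.mp this
  have main : ∀ p : ℕ, p.Prime →
      ¬ p ∣ orderOf A ∧ ¬ p ∣ orderOf B ∧ ¬ p ∣ orderOf C ∧ ¬ p ∣ orderOf D := by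
    intro p
    induction p using Nat.strong_induction_on with
    | _ p ih =>
      intro hp
      refine ⟨?_, ?_, ?_, ?_⟩ <;> intro hdvd
      · obtain ⟨q, hq, hlt, hqd⟩ := key_lemma hA hp hdvd
        exact (ih q hlt hq).2.1 hqd
      · obtain ⟨q, hq, hlt, hqd⟩ := key_lemma hB hp hdvd
        exact (ih q hlt hq).2.2.1 hqd
      · obtain ⟨q, hq, hlt, hqd⟩ := key_lemma hC hp hdvd
        exact (ih q hlt hq).2.2.2 hqd
      · obtain ⟨q, hq, hlt, hqd⟩ := key_lemma hD hp hdvd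
        exact (ih q hlt hq).1 hqd
  have ord_one : ∀ x : F, (∀ p : ℕ, p.Prime → ¬ p ∣ orderOf x) → x = 1 := by
    intro x hx
    have h0 : orderOf x ≠ 0 := (orderOf_pos x).ne'
    have h1 : orderOf x = 1 := by
      by_contra h1
      exact hx (orderOf x).minFac (Nat.minFac_prime h1) (Nat.minFac_dvd _)
    exact orderOf_eq_one_iff.mp h1
  have hA1 : A = 1 := ord_one A fun p hp => (main p hp).1
  have hB1 : B = 1 := ord_one B fun p hp => (main p hp).2.1
  have hC1 : C = 1 := ord_one C fun p hp => (main p hp).2.2.1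
  have hD1 : D = 1 := ord_one D fun p hp => (main p hp).2.2.2
  ext x
  fin_cases x
  · exact hA1
  · exact hB1
  · exact hC1
  · exact hD1
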